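/- arXiv:1210.3184 — 2 statements merged into one kernel-verified Lean document; each statement's English description precedes it below -/
import Mathlib

section
/- Suppose v : [0,T]×ℝⁿ → ℝ is C¹ with Lv(t,x) := ∂v/∂t + ∇ₓv·f(t,x) ≤ 0 for all (t,x) ∈ [0,T]×X̄, and v ≥ 0 on ([0,T]×X_∂) ∪ ({T}×X_T^c), and w : ℝⁿ → ℝ satisfies w(x) ≥ v(0,x)+1 on X. Then w(x₀) ≥ 1 for every x₀ in the complement ROA X₀^c. -/
/-- Lemma 1: Suppose v is C¹ with Lv = ∂v/∂t + ∇ₓv·f ≤ 0 on [0,T]×X̄,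
v ≥ 0 on ([0,T]×X_∂) ∪ ({T}×X_T^c), and w ≥ v(0,·)+1 on X = {g_X > 0}, where
X̄ = {g_X ≥ 0}, X_∂ = {g_X = 0}, X_T^c = {g_X ≥ 0 ∧ g_T ≤ 0}. Then w(x₀) ≥ 1 for every
x₀ in the complement ROA X₀^c, i.e. for every x₀ ∈ X whose trajectory stays in X̄ up to
a time τ ∈ [0,T] at which it either hits X_∂ or (τ = T and) ends in X_T^c. -/
theorem stmt6 (n : ℕ) (T : ℝ) (hT : 0 ≤ T)
    (f : ℝ → (Fin n → ℝ) → (Fin n → ℝ))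
    (gX gT : (Fin n → ℝ) → ℝ)
    (v : ℝ × (Fin n → ℝ) → ℝ) (hv : ContDiff ℝ 1 v)
    (w : (Fin n → ℝ) → ℝ)
    (hLv : ∀ t ∈ Set.Icc 0 T, ∀ x, gX x ≥ 0 → fderiv ℝ v (t, x) (1, f t x) ≤ 0)
    (hv_bdry : ∀ t ∈ Set.Icc 0 T, ∀ x, gX x = 0 → v (t, x) ≥ 0)
    (hv_term : ∀ x, gX x ≥ 0 → gT x ≤ 0 → v (T, x) ≥ 0)
    (hw : ∀ x, gX x > 0 → w x ≥ v (0, x) + 1) :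
    ∀ (x₀ : Fin n → ℝ) (x : ℝ → (Fin n → ℝ)) (τ : ℝ),
      gX x₀ > 0 → τ ∈ Set.Icc 0 T → x 0 = x₀ →
      (∀ t ∈ Set.Icc 0 τ, HasDerivAt x (f t (x t)) t) →
      (∀ t ∈ Set.Icc 0 τ, gX (x t) ≥ 0) →
      (gX (x τ) = 0 ∨ (τ = T ∧ gX (x T) ≥ 0 ∧ gT (x T) ≤ 0)) →
      w x₀ ≥ 1 := by
  intro x₀ x τ hx₀ hτ hx0 hderiv hstay hend
  set φ : ℝ → ℝ := fun t => v (t, x t) with hφ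
  have hvdiff := hv.differentiable one_ne_zero
  have hφd : ∀ t ∈ Set.Icc (0:ℝ) τ,
      HasDerivAt φ (fderiv ℝ v (t, x t) (1, f t (x t))) t := by
    intro t ht
    exact (hvdiff (t, x t)).hasFDerivAt.comp_hasDerivAt t
      (HasDerivAt.prodMk (hasDerivAt_id t) (hderiv t ht))
  have hsub : Set.Icc (0:ℝ) τ ⊆ Set.Icc 0 T := Set.Icc_subset_Icc le_rfl hτ.2
  have hφτ0 : φ τ ≤ φ 0 := by
    have hmono : AntitoneOn φ (Set.Icc 0 τ) := by
      apply antitoneOn_of_deriv_nonpos (convex_Icc 0 τ)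
      · intro t ht; exact (hφd t ht).continuousAt.continuousWithinAt
      · intro t ht
        rw [interior_Icc] at ht
        exact (hφd t (Set.mem_Icc_of_Ioo ht)).differentiableAt.differentiableWithinAt
      · intro t ht
        rw [interior_Icc] at ht
        rw [(hφd t (Set.mem_Icc_of_Ioo ht)).deriv]
        exact hLv t (hsub (Set.mem_Icc_of_Ioo ht)) (x t)
          (hstay t (Set.mem_Icc_of_Ioo ht))
    exact hmono (Set.left_mem_Icc.mpr hτ.1) (Set.right_mem_Icc.mpr hτ.1) hτ.1
  have hφτ : (0:ℝ) ≤ φ τ := by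
    rcases hend with h | ⟨hτT, h1, h2⟩
    · exact hv_bdry τ hτ (x τ) h
    · rw [hφ]; rw [hτT]; exact hv_term (x T) h1 h2
  have hφ0 : φ 0 = v (0, x₀) := by simp [hφ, hx0]
  have := hw x₀ hx₀
  linarith
end

section
/- Under the hypotheses of the previous lemma (Lv ≤ 0 on [0,T]×X̄, v ≥ 0 on ([0,T]×X_∂)∪({T}×X_T^c), w ≥ v(0,·)+1 on X, and additionally w ≥ 0 on X̄), the sublevel set {x ∈ X : w(x) < 1} is contained in the ROA X₀. -/
/-- Under the hypotheses of Lemma 1 (Lv ≤ 0 on [0,T]×X̄, v ≥ 0 on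
([0,T]×X_∂)∪({T}×X_T^c), w ≥ v(0,·)+1 on X, and additionally w ≥ 0 on X̄), the sublevel set
{x ∈ X : w(x) < 1} is contained in the ROA X₀, the set of x₀ ∈ X whose trajectory φ(x₀,·)
stays in X on [0,T] and ends in X_T = {g_T > 0} at time T. -/
theorem stmt7 (n : ℕ) (T : ℝ) (hT : 0 ≤ T)
    (f : ℝ → (Fin n → ℝ) → (Fin n → ℝ))
    (gX gT : (Fin n → ℝ) → ℝ) (hgX : Continuous gX) (hgT : Continuous gT)
    (hXT_sub : ∀ x : Fin n → ℝ, gT x > 0 → gX x > 0)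
    (φ : (Fin n → ℝ) → ℝ → (Fin n → ℝ))
    (hφ0 : ∀ x₀, φ x₀ 0 = x₀)
    (hφode : ∀ x₀, ∀ t ∈ Set.Icc 0 T, HasDerivAt (φ x₀) (f t (φ x₀ t)) t)
    (v : ℝ × (Fin n → ℝ) → ℝ) (hv : ContDiff ℝ 1 v)
    (w : (Fin n → ℝ) → ℝ)
    (hLv : ∀ t ∈ Set.Icc 0 T, ∀ x, gX x ≥ 0 → fderiv ℝ v (t, x) (1, f t x) ≤ 0)
    (hv_bdry : ∀ t ∈ Set.Icc 0 T, ∀ x, gX x = 0 → v (t, x) ≥ 0)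
    (hv_term : ∀ x, gX x ≥ 0 → gT x ≤ 0 → v (T, x) ≥ 0)
    (hw : ∀ x, gX x > 0 → w x ≥ v (0, x) + 1)
    (hw_nonneg : ∀ x, gX x ≥ 0 → w x ≥ 0) :
    {x : Fin n → ℝ | gX x > 0 ∧ w x < 1} ⊆
      {x₀ : Fin n → ℝ | gX x₀ > 0 ∧ (∀ t ∈ Set.Icc 0 T, gX (φ x₀ t) > 0) ∧
        gT (φ x₀ T) > 0} := by
  intro x₀ hx₀
  obtain ⟨hgx₀, hwx₀⟩ := hx₀
  set ψ : ℝ → ℝ := fun t => v (t, φ x₀ t) with hψdef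
  have hψ0 : ψ 0 < 0 := by
    have h1 := hw x₀ hgx₀
    have : ψ 0 = v (0, x₀) := by simp [hψdef, hφ0]
    linarith
  have hψderiv : ∀ t ∈ Set.Icc 0 T,
      HasDerivAt ψ (fderiv ℝ v (t, φ x₀ t) (1, f t (φ x₀ t))) t := by
    intro t ht
    have h1 : HasDerivAt (fun s => (s, φ x₀ s)) ((1 : ℝ), f t (φ x₀ t)) t :=
      HasDerivAt.prodMk (hasDerivAt_id t) (hφode x₀ t ht)
    have h2 : HasFDerivAt v (fderiv ℝ v (t, φ x₀ t)) (t, φ x₀ t) :=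
      ((hv.differentiable one_ne_zero) (t, φ x₀ t)).hasFDerivAt
    exact h2.comp_hasDerivAt t h1
  have hψcont : ContinuousOn ψ (Set.Icc 0 T) := fun t ht =>
    (hψderiv t ht).continuousAt.continuousWithinAt
  have hφcont : ContinuousOn (φ x₀) (Set.Icc 0 T) := fun t ht =>
    (hφode x₀ t ht).continuousAt.continuousWithinAt
  have hgφcont : ContinuousOn (fun s => gX (φ x₀ s)) (Set.Icc 0 T) :=
    hgX.comp_continuousOn hφcont
  -- key monotonicity claim
  have key : ∀ τ ∈ Set.Icc 0 T, (∀ s ∈ Set.Ico 0 τ, gX (φ x₀ s) ≥ 0) → ψ τ ≤ ψ 0 := by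
    intro τ hτ hpos
    have hsub : Set.Icc (0:ℝ) τ ⊆ Set.Icc 0 T := Set.Icc_subset_Icc le_rfl hτ.2
    have hmono : AntitoneOn ψ (Set.Icc 0 τ) := by
      refine antitoneOn_of_deriv_nonpos (convex_Icc 0 τ) (hψcont.mono hsub) ?_ ?_
      · intro s hs
        rw [interior_Icc] at hs
        exact ((hψderiv s (hsub ⟨hs.1.le, hs.2.le⟩)).differentiableAt).differentiableWithinAt
      · intro s hs
        rw [interior_Icc] at hs
        have hsIcc : s ∈ Set.Icc 0 τ := ⟨hs.1.le, hs.2.le⟩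
        rw [(hψderiv s (hsub hsIcc)).deriv]
        exact hLv s (hsub hsIcc) _ (hpos s ⟨hs.1.le, hs.2⟩)
    exact hmono (Set.left_mem_Icc.2 hτ.1) ⟨hτ.1, le_rfl⟩ hτ.1
  -- the trajectory stays in X
  have hstay : ∀ t ∈ Set.Icc 0 T, gX (φ x₀ t) > 0 := by
    by_contra h
    push_neg at h
    obtain ⟨t₁, ht₁, hle⟩ := h
    set S : Set ℝ := Set.Icc 0 T ∩ {t | gX (φ x₀ t) ≤ 0} with hSdef
    have hSne : S.Nonempty := ⟨t₁, ht₁, hle⟩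
    have hSbdd : BddBelow S := ⟨0, fun s hs => hs.1.1⟩
    have hSclosed : IsClosed S :=
      hgφcont.preimage_isClosed_of_isClosed isClosed_Icc isClosed_Iic
    set τ := sInf S with hτdef
    have hτS : τ ∈ S := hSclosed.csInf_mem hSne hSbdd
    have hτIcc : τ ∈ Set.Icc 0 T := hτS.1
    have hτpos : 0 < τ := by
      rcases lt_or_eq_of_le hτIcc.1 with h | h
      · exact h
      · exfalso
        have : gX (φ x₀ τ) ≤ 0 := hτS.2
        rw [← h, hφ0] at this
        linarith
    have hIco : ∀ s ∈ Set.Ico 0 τ, gX (φ x₀ s) > 0 := by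
      intro s hs
      by_contra hns
      push_neg at hns
      have hsS : s ∈ S := ⟨⟨hs.1, hs.2.le.trans hτIcc.2⟩, hns⟩
      exact absurd (csInf_le hSbdd hsS) (not_le.2 hs.2)
    -- gX (φ x₀ τ) ≥ 0 by continuity from the left
    have hge : 0 ≤ gX (φ x₀ τ) := by
      have hmem : τ ∈ closure (Set.Ioo 0 τ) := by
        rw [closure_Ioo hτpos.ne]
        exact ⟨hτpos.le, le_rfl⟩
      haveI hne : (nhdsWithin τ (Set.Ioo 0 τ)).NeBot :=
        mem_closure_iff_nhdsWithin_neBot.mp hmem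
      have hsub : Set.Ioo (0:ℝ) τ ⊆ Set.Icc 0 T := fun s hs =>
        ⟨hs.1.le, hs.2.le.trans hτIcc.2⟩
      have hcw : ContinuousWithinAt (fun s => gX (φ x₀ s)) (Set.Ioo 0 τ) τ :=
        (hgφcont τ hτIcc).mono hsub
      exact ge_of_tendsto hcw
        (eventually_mem_nhdsWithin.mono fun s hs => (hIco s ⟨hs.1.le, hs.2⟩).le)
    have hzero : gX (φ x₀ τ) = 0 := le_antisymm hτS.2 hge
    have hψτ : ψ τ ≤ ψ 0 := key τ hτIcc fun s hs => (hIco s hs).le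
    have := hv_bdry τ hτIcc (φ x₀ τ) hzero
    have : ψ τ ≥ 0 := this
    linarith
  refine ⟨hgx₀, hstay, ?_⟩
  by_contra hneg
  push_neg at hneg
  have hψT : ψ T ≤ ψ 0 :=
    key T ⟨hT, le_rfl⟩ fun s hs => (hstay s ⟨hs.1, hs.2.le⟩).le
  have := hv_term (φ x₀ T) (hstay T ⟨hT, le_rfl⟩).le hneg
  have : ψ T ≥ 0 := this
  linarith
end
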